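/- Let k ≥ 2 and let s_1, ..., s_k be pairwise distinct complex numbers. Define, for 1 ≤ l ≤ k, c_l = ∏_{r=1}^{l−1} (s_r − s_{r+1})/(s_r − s_l) (with c_1 = 1) and c'_l = (−1)^{k−l} ∏_{r=l}^{k−1} (s_r − s_{r+1})/(s_l − s_{r+1}) (with c'_k = 1). Then ∑_{l=1}^{k} c_l · c'_l = 0. -/

import Mathlib

open Finset Polynomial

lemma lagrange_sum_inv_eq_zero (k : ℕ) (hk : 2 ≤ k) (s : ℕ → ℂ)
    (hinj : Set.InjOn s (Finset.range k)) :
    ∑ l ∈ Finset.range k, (∏ j ∈ (Finset.range k).erase l, (s l - s j))⁻¹ = 0 := by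
  have hne : (Finset.range k).Nonempty := ⟨0, by simp; omega⟩
  have h1 := Lagrange.sum_basis hinj hne
  have h2 := congrArg (fun p => Polynomial.coeff p (k - 1)) h1
  rw [Polynomial.coeff_one, if_neg (by omega), Polynomial.finset_sum_coeff] at h2
  rw [← h2]
  refine Finset.sum_congr rfl fun l hl => ?_
  have hcoeff : (Lagrange.basis (Finset.range k) s l).coeff (k - 1)
      = (Lagrange.basis (Finset.range k) s l).leadingCoeff := by
    rw [Polynomial.leadingCoeff, Lagrange.natDegree_basis hinj hl, Finset.card_range]
  rw [hcoeff, Lagrange.basis, Polynomial.leadingCoeff_prod, ← Finset.prod_inv_distrib]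
  refine Finset.prod_congr rfl fun j hj => ?_
  have hj' := Finset.mem_erase.mp hj
  have hne' : s l - s j ≠ 0 := sub_ne_zero_of_ne (fun h => hj'.1.symm (hinj hl hj'.2 h))
  rw [Lagrange.basisDivisor, Polynomial.leadingCoeff_mul, Polynomial.leadingCoeff_C,
    Polynomial.leadingCoeff_X_sub_C, mul_one]

/-- for `k ≥ 2` and pairwise distinct complex numbers `s_1, ..., s_k`
(realized 0-based as `s 0, ..., s (k-1)`), with
`c_l = ∏_{r=1}^{l−1} (s_r − s_{r+1})/(s_r − s_l)` and
`c'_l = (−1)^{k−l} ∏_{r=l}^{k−1} (s_r − s_{r+1})/(s_l − s_{r+1})`,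
one has `∑_{l=1}^k c_l · c'_l = 0`. -/
theorem chain_constants_sum_eq_zero (k : ℕ) (hk : 2 ≤ k) (s : ℕ → ℂ)
    (hs : ∀ i j, i < k → j < k → i ≠ j → s i ≠ s j) :
    ∑ l ∈ Finset.range k,
        (∏ r ∈ Finset.range l, (s r - s (r + 1)) / (s r - s l)) *
          ((-1 : ℂ) ^ (k - 1 - l) *
            ∏ r ∈ Finset.Ico l (k - 1), (s r - s (r + 1)) / (s l - s (r + 1))) = 0 := by
  have hinj : Set.InjOn s (Finset.range k) := by
    intro i hi j hj hij
    by_contra hne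
    exact hs i j (by simpa using hi) (by simpa using hj) hne hij
  set A : ℂ := ∏ r ∈ Finset.range (k - 1), (s r - s (r + 1)) with hA
  have key : ∀ l ∈ Finset.range k,
      (∏ r ∈ Finset.range l, (s r - s (r + 1)) / (s r - s l)) *
        ((-1 : ℂ) ^ (k - 1 - l) *
          ∏ r ∈ Finset.Ico l (k - 1), (s r - s (r + 1)) / (s l - s (r + 1)))
      = A * (-1 : ℂ) ^ (k - 1) *
          (∏ j ∈ (Finset.range k).erase l, (s l - s j))⁻¹ := by
    intro l hl
    rw [Finset.mem_range] at hl
    have hlk : l ≤ k - 1 := by omega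
    -- numerators combine
    have hnum : (∏ r ∈ Finset.range l, (s r - s (r + 1))) *
        ∏ r ∈ Finset.Ico l (k - 1), (s r - s (r + 1)) = A := by
      rw [hA, Finset.prod_range_mul_prod_Ico _ hlk]
    -- denominator 1
    have hd1 : (∏ r ∈ Finset.range l, (s r - s l))
        = (-1 : ℂ) ^ l * ∏ r ∈ Finset.range l, (s l - s r) := by
      rw [show ∀ F : ℕ → ℂ, (∏ r ∈ Finset.range l, F r)
            = ∏ r ∈ Finset.range l, F r from fun _ => rfl]
      calc (∏ r ∈ Finset.range l, (s r - s l))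
          = ∏ r ∈ Finset.range l, (-1 : ℂ) * (s l - s r) := by
            exact Finset.prod_congr rfl fun r _ => by ring
        _ = (∏ _r ∈ Finset.range l, (-1 : ℂ)) * ∏ r ∈ Finset.range l, (s l - s r) :=
            Finset.prod_mul_distrib
        _ = (-1 : ℂ) ^ l * ∏ r ∈ Finset.range l, (s l - s r) := by
            rw [Finset.prod_const, Finset.card_range]
    -- denominator 2 reindex
    have hd2 : (∏ r ∈ Finset.Ico l (k - 1), (s l - s (r + 1)))
        = ∏ j ∈ Finset.Ico (l + 1) k, (s l - s j) := by
      have : Finset.Ico (l + 1) k = (Finset.Ico l (k - 1)).map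
          (addRightEmbedding 1) := by
        rw [Finset.map_add_right_Ico]
        congr 1
        omega
      rw [this, Finset.prod_map]
      rfl
    -- erase decomposition
    have herase : (Finset.range k).erase l
        = Finset.range l ∪ Finset.Ico (l + 1) k := by
      ext x
      simp only [Finset.mem_erase, Finset.mem_range, Finset.mem_union, Finset.mem_Ico]
      omega
    have hdisj : Disjoint (Finset.range l) (Finset.Ico (l + 1) k) := by
      rw [Finset.disjoint_left]
      intro x hx hx'
      simp only [Finset.mem_range] at hx
      simp only [Finset.mem_Ico] at hx'
      omega
    have hE : (∏ j ∈ (Finset.range k).erase l, (s l - s j))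
        = (∏ r ∈ Finset.range l, (s l - s r)) * ∏ j ∈ Finset.Ico (l + 1) k, (s l - s j) := by
      rw [herase, Finset.prod_union hdisj]
    -- nonzeroness
    have hne1 : (∏ r ∈ Finset.range l, (s l - s r)) ≠ 0 := by
      rw [Finset.prod_ne_zero_iff]
      intro r hr
      rw [Finset.mem_range] at hr
      exact sub_ne_zero_of_ne (hs l r hl (by omega) (by omega))
    have hne2 : (∏ j ∈ Finset.Ico (l + 1) k, (s l - s j)) ≠ 0 := by
      rw [Finset.prod_ne_zero_iff]
      intro r hr
      rw [Finset.mem_Ico] at hr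
      exact sub_ne_zero_of_ne (hs l r hl (by omega) (by omega))
    have hsign : (-1 : ℂ) ^ (k - 1 - l) * (-1 : ℂ) ^ l = (-1 : ℂ) ^ (k - 1) := by
      rw [← pow_add]
      congr 1
      omega
    have hinvl : ((-1 : ℂ) ^ l)⁻¹ = (-1 : ℂ) ^ l := by
      rw [← inv_pow, inv_neg, inv_one]
    rw [Finset.prod_div_distrib, Finset.prod_div_distrib, div_eq_mul_inv, div_eq_mul_inv,
      hd1, hd2, hE, mul_inv, mul_inv, hinvl, ← hnum, ← hsign]
    ring
  rw [Finset.sum_congr rfl key, ← Finset.mul_sum,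
    lagrange_sum_inv_eq_zero k hk s hinj, mul_zero]
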